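/- Weak duality for the DRO inner problem: for the empirical distribution P̂_N = (1/N)Σᵢ δ_{ξ̂ᵢ} and support Ξ = {ξ : Hξ ≤ d}, the worst-case expectation sup_{Q : d_W(P̂_N,Q) ≤ ε} E^Q[max_k(⟨a_k, ξ⟩ + b_k)] is bounded above by the optimal value of the finite program: minimize λε + (1/N)Σᵢ sᵢ subject to b_k + ⟨a_k, ξ̂ᵢ⟩ + ⟨γ_{ik}, d − Hξ̂ᵢ⟩ ≤ sᵢ, ‖H'γ_{ik} − a_k‖_* ≤ λ, γ_{ik} ≥ 0 for all i ≤ N and k ≤ K. In the special case Ξ = ℝ^m (H = 0, d = 0), the bound reads: for any λ ≥ max_k ‖a_k‖_* and sᵢ ≥ max_k(b_k + ⟨a_k, ξ̂ᵢ⟩), sup over Q in the Wasserstein ball of E^Q[max_k(⟨a_k,ξ⟩+b_k)] ≤ λε + (1/N)Σᵢ sᵢ. -/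

import Mathlib

open MeasureTheory

/-- Dual (Kantorovich–Rubinstein) Wasserstein distance: supremum over
1-Lipschitz functions of the difference of integrals. -/
noncomputable def dW {E : Type*} [MeasurableSpace E] [NormedAddCommGroup E]
    (μ ν : Measure E) : ℝ :=
  ⨆ f : {f : E → ℝ // LipschitzWith 1 f}, (∫ x, f.1 x ∂μ - ∫ x, f.1 x ∂ν)

private lemma integrable_dirac_of_sm {α : Type*} [MeasurableSpace α] {f : α → ℝ}
    (hf : StronglyMeasurable f) (x : α) : Integrable f (Measure.dirac x) := by
  refine ⟨hf.aestronglyMeasurable, ?_⟩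
  rw [HasFiniteIntegral]
  rw [lintegral_dirac' x (f := fun a => ‖f a‖ₑ) (by
    exact hf.measurable.enorm)]
  exact enorm_lt_top

/-- Weak duality for the DRO inner problem in the unconstrained-support case
`Ξ = ℝ^m`: for any feasible `(λ, s)` of the dual finite program, the worst-case
expectation over the Wasserstein ball is bounded by `λε + (1/N)Σᵢ sᵢ`. -/
theorem dro_weak_duality {m N K : ℕ} [Nonempty (Fin N)] [Nonempty (Fin K)]
    (xi : Fin N → EuclideanSpace ℝ (Fin m))
    (a : Fin K → EuclideanSpace ℝ (Fin m)) (b : Fin K → ℝ)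
    (ε lam : ℝ) (hε : 0 ≤ ε) (s : Fin N → ℝ)
    (hlam : ∀ k, ‖a k‖ ≤ lam)
    (hs : ∀ i k, b k + (inner ℝ (a k) (xi i) : ℝ) ≤ s i) :
    (⨆ Q : {Q : Measure (EuclideanSpace ℝ (Fin m)) // IsProbabilityMeasure Q ∧
        Integrable (fun x => ‖x‖) Q ∧
        dW ((N : ENNReal)⁻¹ • ∑ i : Fin N, Measure.dirac (xi i)) Q ≤ ε},
      ∫ ξ, (Finset.univ.sup' Finset.univ_nonempty
          fun k => (inner ℝ (a k) ξ : ℝ) + b k) ∂(Q.1)) ≤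
      lam * ε + (1 / (N : ℝ)) * ∑ i, s i := by
  obtain ⟨k₀⟩ := (inferInstance : Nonempty (Fin K))
  have hNpos : 0 < N := by rcases (inferInstance : Nonempty (Fin N)) with ⟨i⟩; exact i.pos
  have hNne : (N : ℝ) ≠ 0 := Nat.cast_ne_zero.2 hNpos.ne'
  have hlam0 : 0 ≤ lam := le_trans (norm_nonneg (a k₀)) (hlam k₀)
  set g : EuclideanSpace ℝ (Fin m) → ℝ :=
    fun ξ => Finset.univ.sup' Finset.univ_nonempty fun k => (inner ℝ (a k) ξ : ℝ) + b k with hg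
  -- one-sided Lipschitz estimate
  have hgle : ∀ x y, g x ≤ g y + lam * dist x y := by
    intro x y
    apply Finset.sup'_le
    intro k _
    have h1 : (inner ℝ (a k) x : ℝ) + b k
        = ((inner ℝ (a k) y : ℝ) + b k) + (inner ℝ (a k) (x - y) : ℝ) := by
      rw [inner_sub_right]; ring
    have h2 : (inner ℝ (a k) y : ℝ) + b k ≤ g y :=
      Finset.le_sup' (fun k => (inner ℝ (a k) y : ℝ) + b k) (Finset.mem_univ k)
    have h3 : (inner ℝ (a k) (x - y) : ℝ) ≤ ‖a k‖ * ‖x - y‖ := real_inner_le_norm _ _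
    have h4 : ‖a k‖ * ‖x - y‖ ≤ lam * dist x y := by
      rw [dist_eq_norm]
      exact mul_le_mul_of_nonneg_right (hlam k) (norm_nonneg _)
    rw [h1]; linarith
  have hgabs : ∀ x y, |g x - g y| ≤ lam * dist x y := by
    intro x y
    rw [abs_sub_le_iff]
    refine ⟨by linarith [hgle x y], ?_⟩
    have := hgle y x; rw [dist_comm] at this; linarith
  have hgLip : LipschitzWith (Real.toNNReal lam) g := by
    apply LipschitzWith.of_dist_le_mul
    intro x y
    rw [Real.coe_toNNReal _ hlam0, Real.dist_eq]
    exact hgabs x y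
  have hgsm : StronglyMeasurable g := hgLip.continuous.stronglyMeasurable
  set μ : Measure (EuclideanSpace ℝ (Fin m)) :=
    (N : ENNReal)⁻¹ • ∑ i : Fin N, Measure.dirac (xi i) with hμ
  have hμprob : IsProbabilityMeasure μ := by
    constructor
    have hsum : ((∑ i : Fin N, Measure.dirac (xi i)) : Measure _) Set.univ = N := by
      rw [Measure.finset_sum_apply]
      simp
    rw [hμ, Measure.smul_apply, hsum, smul_eq_mul]
    exact ENNReal.inv_mul_cancel (by exact_mod_cast hNpos.ne') (by simp)
  haveI := hμprob
  have hint_μ : ∀ f : EuclideanSpace ℝ (Fin m) → ℝ, StronglyMeasurable f → Integrable f μ := by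
    intro f hf
    rw [hμ]
    refine Integrable.smul_measure ?_ (ENNReal.inv_ne_top.2 (by exact_mod_cast hNpos.ne'))
    exact integrable_finset_sum_measure.2 fun i _ => integrable_dirac_of_sm hf (xi i)
  have hμint : ∀ f : EuclideanSpace ℝ (Fin m) → ℝ, StronglyMeasurable f →
      ∫ x, f x ∂μ = (1 / (N : ℝ)) * ∑ i, f (xi i) := by
    intro f hf
    rw [hμ, integral_smul_measure,
      integral_finset_sum_measure (fun i _ => integrable_dirac_of_sm hf (xi i))]
    simp only [integral_dirac' _ _ hf, smul_eq_mul, ENNReal.toReal_inv, ENNReal.toReal_natCast,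
      one_div]
  have hnormμ : Integrable (fun x => ‖x‖) μ :=
    hint_μ _ continuous_norm.stronglyMeasurable
  -- boundedness of the Kantorovich sup
  have key : ∀ (ν : Measure (EuclideanSpace ℝ (Fin m))), IsProbabilityMeasure ν →
      Integrable (fun x => ‖x‖) ν →
      ∀ f : {f : EuclideanSpace ℝ (Fin m) → ℝ // LipschitzWith 1 f},
        ∫ x, f.1 x ∂μ - ∫ x, f.1 x ∂ν ≤ ∫ x, ‖x‖ ∂μ + ∫ x, ‖x‖ ∂ν := by
    rintro ν hν hνnorm ⟨f, hfL⟩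
    haveI := hν
    have hfabs : ∀ x, |f x - f 0| ≤ ‖x‖ := by
      intro x
      have := hfL.dist_le_mul x 0
      rwa [Real.dist_eq, NNReal.coe_one, one_mul, dist_zero_right] at this
    have hfν : Integrable f ν := by
      refine Integrable.mono' ((integrable_const (|f 0|)).add hνnorm)
        hfL.continuous.stronglyMeasurable.aestronglyMeasurable ?_
      filter_upwards with x
      have h := abs_le.1 (hfabs x)
      simp only [Pi.add_apply]
      rw [Real.norm_eq_abs, abs_le]
      constructor
      · linarith [neg_abs_le (f 0)]
      · linarith [le_abs_self (f 0)]
    have hfμ : Integrable f μ := hint_μ f hfL.continuous.stronglyMeasurable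
    have h1 : ∫ x, f x ∂μ ≤ f 0 + ∫ x, ‖x‖ ∂μ := by
      have hmono : ∫ x, f x ∂μ ≤ ∫ x, (f 0 + ‖x‖) ∂μ := by
        refine integral_mono hfμ ((integrable_const _).add hnormμ) ?_
        intro x; have := abs_le.1 (hfabs x); dsimp; linarith [this.2]
      rwa [integral_add (integrable_const _) hnormμ, integral_const, probReal_univ,
        one_smul] at hmono
    have h2 : f 0 - ∫ x, ‖x‖ ∂ν ≤ ∫ x, f x ∂ν := by
      have hmono : ∫ x, (f 0 - ‖x‖) ∂ν ≤ ∫ x, f x ∂ν := by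
        refine integral_mono ((integrable_const _).sub hνnorm) hfν ?_
        intro x; have := abs_le.1 (hfabs x); dsimp; linarith [this.1]
      rwa [integral_sub (integrable_const _) hνnorm, integral_const, probReal_univ,
        one_smul] at hmono
    linarith
  haveI hLne : Nonempty {f : EuclideanSpace ℝ (Fin m) → ℝ // LipschitzWith 1 f} :=
    ⟨⟨fun _ => 0, (LipschitzWith.const 0).weaken zero_le_one⟩⟩
  haveI hQne : Nonempty {Q : Measure (EuclideanSpace ℝ (Fin m)) // IsProbabilityMeasure Q ∧
      Integrable (fun x => ‖x‖) Q ∧ dW μ Q ≤ ε} := by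
    refine ⟨⟨μ, hμprob, hnormμ, ?_⟩⟩
    have h0 : dW μ μ = 0 := by unfold dW; simp
    rw [h0]; exact hε
  refine ciSup_le ?_
  rintro ⟨Q, hQp, hQi, hQd⟩
  haveI := hQp
  dsimp only
  -- Step B : empirical integral bound
  have hBμ : ∫ x, g x ∂μ ≤ (1 / (N : ℝ)) * ∑ i, s i := by
    rw [hμint g hgsm]
    refine mul_le_mul_of_nonneg_left (Finset.sum_le_sum fun i _ => ?_) (by positivity)
    show g (xi i) ≤ s i
    simp only [hg]
    exact Finset.sup'_le _ _ fun k _ => by have := hs i k; linarith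
  -- Step A : Wasserstein transfer
  have hA : ∫ x, g x ∂Q ≤ ∫ x, g x ∂μ + lam * ε := by
    rcases eq_or_lt_of_le hlam0 with h0 | hpos
    · have hconst : ∀ x, g x = g 0 := by
        intro x
        have h := hgabs x 0
        rw [← h0, zero_mul] at h
        have := abs_nonneg (g x - g 0)
        have : |g x - g 0| = 0 := le_antisymm h this
        have := abs_eq_zero.1 this
        linarith
      have hgfun : g = fun _ => g 0 := funext hconst
      rw [hgfun, integral_const, integral_const, probReal_univ, probReal_univ, ← h0]
      simp
    · set f : EuclideanSpace ℝ (Fin m) → ℝ := fun x => lam⁻¹ * (- g x) with hf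
      have hfLip : LipschitzWith 1 f := by
        apply LipschitzWith.of_dist_le_mul
        intro x y
        rw [NNReal.coe_one, one_mul, Real.dist_eq]
        have he : f x - f y = lam⁻¹ * (g y - g x) := by rw [hf]; ring
        rw [he, abs_mul, abs_of_nonneg (inv_nonneg.2 hlam0), abs_sub_comm]
        calc lam⁻¹ * |g x - g y| ≤ lam⁻¹ * (lam * dist x y) :=
              mul_le_mul_of_nonneg_left (hgabs x y) (inv_nonneg.2 hlam0)
          _ = dist x y := by rw [← mul_assoc, inv_mul_cancel₀ hpos.ne', one_mul]
      have hbdd : BddAbove (Set.range fun f : {f : EuclideanSpace ℝ (Fin m) → ℝ //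
          LipschitzWith 1 f} => ∫ x, f.1 x ∂μ - ∫ x, f.1 x ∂Q) := by
        refine ⟨∫ x, ‖x‖ ∂μ + ∫ x, ‖x‖ ∂Q, ?_⟩
        rintro _ ⟨f', rfl⟩
        exact key Q hQp hQi f'
      have hle : ∫ x, f x ∂μ - ∫ x, f x ∂Q ≤ ε := by
        refine le_trans ?_ hQd
        exact le_ciSup hbdd ⟨f, hfLip⟩
      have hμf : ∫ x, f x ∂μ = lam⁻¹ * (- ∫ x, g x ∂μ) := by
        rw [hf]; rw [integral_const_mul, integral_neg]
      have hQf : ∫ x, f x ∂Q = lam⁻¹ * (- ∫ x, g x ∂Q) := by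
        rw [hf]; rw [integral_const_mul, integral_neg]
      rw [hμf, hQf] at hle
      have h2 : lam⁻¹ * (∫ x, g x ∂Q - ∫ x, g x ∂μ) ≤ ε := by
        calc lam⁻¹ * (∫ x, g x ∂Q - ∫ x, g x ∂μ)
            = lam⁻¹ * (- ∫ x, g x ∂μ) - lam⁻¹ * (- ∫ x, g x ∂Q) := by ring
          _ ≤ ε := hle
      have h3 := mul_le_mul_of_nonneg_left h2 hlam0
      rw [← mul_assoc, mul_inv_cancel₀ (ne_of_gt hpos), one_mul] at h3
      linarith
  linarith
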